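/- arXiv:2411.07046 — 3 statements merged into one kernel-verified Lean document; each statement's English description precedes it below -/
import Mathlib

section
/- For any self-adjoint operator D on a Hilbert space with 0 not in its spectrum, the spectral projection onto the positive part satisfies 1_{(0,∞)}(D) = 1/2 + (1/2π) ∫_{-∞}^{∞} (D + iz)^{-1} dz, where the integral is understood as a principal value/strong limit. -/
open MeasureTheory Filter Topology Real

section aux


lemma aux_ne (r : ℝ) (hr : r ≠ 0) (z : ℝ) : (r : ℂ) + (z : ℂ) * Complex.I ≠ 0 := by
  intro h
  apply hr
  simpa using congrArg Complex.re h

lemma aux_hasDerivAt (r : ℝ) (hr : r ≠ 0) (z : ℝ) :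
    HasDerivAt (fun z : ℝ => ((Real.arctan (z / r) : ℂ) -
        (Complex.I / 2) * (Real.log (r ^ 2 + z ^ 2) : ℂ)))
      (((r : ℂ) + (z : ℂ) * Complex.I)⁻¹) z := by
  have hpos : (0 : ℝ) < r ^ 2 + z ^ 2 := by positivity
  have h1 : HasDerivAt (fun z : ℝ => Real.arctan (z / r)) ((1 / (1 + (z / r) ^ 2)) * (1 / r)) z := by
    exact (Real.hasDerivAt_arctan (z / r)).comp z ((hasDerivAt_id z).div_const r)
  have h2 : HasDerivAt (fun z : ℝ => Real.log (r ^ 2 + z ^ 2))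
      ((r ^ 2 + z ^ 2)⁻¹ * (2 * z)) z := by
    have := ((hasDerivAt_pow 2 z).const_add (r ^ 2))
    have hlog := (Real.hasDerivAt_log hpos.ne').comp z this
    simp at hlog; exact hlog
  have h := (h1.ofReal_comp).sub ((h2.ofReal_comp).const_mul (Complex.I / 2))
  convert h using 1
  · rfl
  · rfl
  have hne : (r : ℂ) + (z : ℂ) * Complex.I ≠ 0 := aux_ne r hr z
  have hsq : ((r : ℂ) ^ 2 + (z : ℂ) ^ 2) ≠ 0 := by
    have : ((r : ℂ) ^ 2 + (z : ℂ) ^ 2) = ((r ^ 2 + z ^ 2 : ℝ) : ℂ) := by push_cast; ring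
    rw [this]
    exact_mod_cast hpos.ne'
  have h1r : (1 : ℝ) + (z / r) ^ 2 ≠ 0 := by positivity
  have e1 : (1 / (1 + (z / r) ^ 2) * (1 / r)) = r / (r ^ 2 + z ^ 2) := by
    field_simp
  rw [e1]
  have hrc : (r : ℂ) ≠ 0 := by exact_mod_cast hr
  refine inv_eq_of_mul_eq_one_right ?_
  push_cast
  field_simp
  ring_nf
  simp [Complex.I_sq]

lemma aux_integral (r R : ℝ) (hr : r ≠ 0) :
    (∫ z in (-R)..R, ((r : ℂ) + (z : ℂ) * Complex.I)⁻¹) = (2 * Real.arctan (R / r) : ℝ) := by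
  have hcont : Continuous fun z : ℝ => ((r : ℂ) + (z : ℂ) * Complex.I)⁻¹ :=
    (continuous_const.add (Complex.continuous_ofReal.mul continuous_const)).inv₀ (aux_ne r hr)
  rw [intervalIntegral.integral_eq_sub_of_hasDerivAt
      (fun z _ => aux_hasDerivAt r hr z) (hcont.intervalIntegrable _ _)]
  have : ((-R) : ℝ) ^ 2 = R ^ 2 := by ring
  simp [this, Real.arctan_neg, neg_div]
  push_cast
  ring

lemma aux_arctan_nonneg {x : ℝ} (hx : 0 ≤ x) : 0 ≤ Real.arctan x := by
  rw [← Real.arctan_zero]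
  exact Real.arctan_strictMono.monotone hx

lemma aux_arctan_le_self {x : ℝ} (hx : 0 ≤ x) : Real.arctan x ≤ x :=
  calc Real.arctan x ≤ Real.tan (Real.arctan x) :=
        Real.le_tan (aux_arctan_nonneg hx) (Real.arctan_lt_pi_div_two x)
    _ = x := Real.tan_arctan x

lemma aux_bound (M R r : ℝ) (hR : 0 < R) (hr : r ≠ 0) (hM : |r| ≤ M) :
    |1 / 2 + Real.arctan (R / r) / π - (if 0 < r then (1 : ℝ) else 0)| ≤ M / (π * R) := by
  have hπ := Real.pi_pos
  have key : ∀ s : ℝ, 0 < s → |1 / 2 - Real.arctan (R / s) / π| ≤ M / (π * R) → True := fun _ _ _ => trivial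
  have main : ∀ s : ℝ, 0 < s → s ≤ M → 1 / 2 - Real.arctan (R / s) / π ≤ M / (π * R) ∧
      0 ≤ 1 / 2 - Real.arctan (R / s) / π := by
    intro s hs hsM
    have hRs : 0 < R / s := by positivity
    have hinv : Real.arctan (s / R) = π / 2 - Real.arctan (R / s) := by
      have := Real.arctan_inv_of_pos hRs
      rwa [show (R / s)⁻¹ = s / R by field_simp] at this
    constructor
    · have h1 : Real.arctan (s / R) ≤ s / R := aux_arctan_le_self (by positivity)
      have h2 : s / R ≤ M / R := by gcongr
      have : 1 / 2 - Real.arctan (R / s) / π = Real.arctan (s / R) / π := by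
        rw [hinv]; field_simp
      rw [this]
      rw [div_le_div_iff₀ hπ (by positivity)]
      calc Real.arctan (s / R) * (π * R) = (Real.arctan (s / R) * R) * π := by ring
        _ ≤ M * π := by
            have : Real.arctan (s / R) * R ≤ M := by
              have := mul_le_mul_of_nonneg_right (h1.trans h2) hR.le
              rwa [div_mul_cancel₀ _ hR.ne'] at this
            exact mul_le_mul_of_nonneg_right this hπ.le
        _ = M * π := rfl
    · have : Real.arctan (R / s) ≤ π / 2 := (Real.arctan_lt_pi_div_two _).le
      have h0 : Real.arctan (R / s) / π ≤ 1 / 2 := by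
        rw [div_le_div_iff₀ hπ (by norm_num : (0:ℝ) < 2)] at *
        nlinarith
      linarith
  rcases lt_or_gt_of_ne hr with hneg | hpos
  · rw [if_neg (not_lt.mpr hneg.le)]
    have h := main (-r) (by linarith) (by rwa [abs_of_neg hneg] at hM)
    have e : Real.arctan (R / r) = - Real.arctan (R / -r) := by
      rw [show R / r = -(R / -r) by field_simp, Real.arctan_neg]
    rw [e, show (1:ℝ) / 2 + -Real.arctan (R / -r) / π - 0
        = 1 / 2 - Real.arctan (R / -r) / π from by ring, abs_of_nonneg h.2]
    exact h.1
  · rw [if_pos hpos]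
    have h := main r hpos (by rwa [abs_of_pos hpos] at hM)
    rw [show (1:ℝ) / 2 + Real.arctan (R / r) / π - 1
        = -(1 / 2 - Real.arctan (R / r) / π) from by ring, abs_neg, abs_of_nonneg h.2]
    exact h.1

end aux

/-- Cauchy integral representation of the positive spectral projection: for a
self-adjoint operator `D` with `0 ∉ σ(D)`,
`1_{(0,∞)}(D) = 1/2 + (1/2π) ∫_{-∞}^{∞} (D + iz)⁻¹ dz`,
where the integral converges strongly as a symmetric principal value. -/
theorem cauchy_representation_positive_spectral_projection
    {H : Type*} [NormedAddCommGroup H] [InnerProductSpace ℂ H] [CompleteSpace H]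
    (D : H →L[ℂ] H) (hD : IsSelfAdjoint D) (h0 : (0 : ℂ) ∉ spectrum ℂ D) (u : H) :
    Tendsto
      (fun R : ℝ => (1 / 2 : ℂ) • u +
        (1 / (2 * Real.pi) : ℂ) •
          ∫ z in (-R)..R, (Ring.inverse (D + ((z : ℂ) * Complex.I) • 1)) u)
      atTop
      (𝓝 ((cfc (fun t : ℝ => if 0 < t then (1 : ℝ) else 0) D) u)) := by
  have hN : IsStarNormal D := hD.isStarNormal
  haveI : CompactSpace (spectrum ℂ D) :=
    isCompact_iff_compactSpace.mp (spectrum.isCompact D)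
  have hre : ∀ t : spectrum ℂ D, (((t : ℂ).re : ℂ)) = (t : ℂ) := fun t =>
    (hD.mem_spectrum_eq_re t.2).symm
  have hre0 : ∀ t : spectrum ℂ D, (t : ℂ).re ≠ 0 := by
    intro t ht
    apply h0
    have h1 := hD.mem_spectrum_eq_re t.2
    have : (t : ℂ) = 0 := by rw [h1, ht]; simp
    rw [← this]; exact t.2
  -- nonvanishing
  have hnz : ∀ (z : ℝ) (t : spectrum ℂ D), (t : ℂ) + (z : ℂ) * Complex.I ≠ 0 := by
    intro z t
    rw [← hre t]
    exact aux_ne _ (hre0 t) z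
  -- family of continuous functions
  have hcont2 : Continuous fun p : ℝ × spectrum ℂ D =>
      ((p.2 : ℂ) + (p.1 : ℂ) * Complex.I)⁻¹ := by
    apply Continuous.inv₀
    · fun_prop
    · exact fun p => hnz p.1 p.2
  set Fc : C(ℝ × spectrum ℂ D, ℂ) := ⟨_, hcont2⟩ with hFc
  set F : C(ℝ, C(spectrum ℂ D, ℂ)) := Fc.curry with hF
  set Φ : C(spectrum ℂ D, ℂ) →L[ℂ] (H →L[ℂ] H) := cfcL (R := ℂ) hN with hΦ
  set Ψ : C(spectrum ℂ D, ℂ) →L[ℂ] H :=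
    (ContinuousLinearMap.apply ℂ H u).comp Φ with hΨ
  -- resolvent identity
  have key_inv : ∀ z : ℝ, Ring.inverse (D + ((z : ℂ) * Complex.I) • 1) = Φ (F z) := by
    intro z
    have hfc : ContinuousOn (fun t : ℂ => (t + (z : ℂ) * Complex.I)⁻¹) (spectrum ℂ D) := by
      apply ContinuousOn.inv₀
      · fun_prop
      · exact fun t ht => hnz z ⟨t, ht⟩
    have hplus : D + ((z : ℂ) * Complex.I) • 1 = cfc (fun t : ℂ => t + (z : ℂ) * Complex.I) D := by
      rw [cfc_add_const ((z : ℂ) * Complex.I) (fun x => x) D (by fun_prop) hN,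
        cfc_id' ℂ D, Algebra.algebraMap_eq_smul_one]
    rw [hplus, ← cfc_inv _ D (fun t ht => hnz z ⟨t, ht⟩) (by fun_prop) hN,
      cfc_eq_cfcL hN hfc]
    congr 1
  -- integrability
  have hFI : ∀ R : ℝ, IntervalIntegrable (fun z => F z) volume (-R) R :=
    fun R => (map_continuous F).intervalIntegrable _ _
  -- interchange
  have interchange : ∀ R : ℝ,
      (∫ z in (-R)..R, (Ring.inverse (D + ((z : ℂ) * Complex.I) • 1)) u) =
        Ψ (∫ z in (-R)..R, F z) := by
    intro R
    rw [← Ψ.intervalIntegral_comp_comm (hFI R)]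
    congr 1
    ext z
    rw [key_inv z]
    rfl
  -- value identity
  have hΨone : Ψ (1 : C(spectrum ℂ D, ℂ)) = u := by
    show (cfcL (R := ℂ) hN (1 : C(spectrum ℂ D, ℂ))) u = u
    rw [cfcL_apply, map_one]
    rfl
  set G : ℝ → C(spectrum ℂ D, ℂ) := fun R =>
    (1 / 2 : ℂ) • 1 + (1 / (2 * Real.pi) : ℂ) • ∫ z in (-R)..R, F z with hG
  have value_eq : ∀ R : ℝ,
      (1 / 2 : ℂ) • u + (1 / (2 * Real.pi) : ℂ) •
        ∫ z in (-R)..R, (Ring.inverse (D + ((z : ℂ) * Complex.I) • 1)) u = Ψ (G R) := by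
    intro R
    rw [hG]
    simp only [map_add, Ψ.map_smul, hΨone, interchange R]
  -- indicator as a continuous map on the spectrum
  have hHc : ContinuousOn (fun x : ℂ => ((if 0 < x.re then (1 : ℝ) else 0 : ℝ) : ℂ))
      (spectrum ℂ D) := by
    intro x hx
    apply ContinuousAt.continuousWithinAt
    rcases lt_or_gt_of_ne (hre0 ⟨x, hx⟩) with hlt | hgt
    · have hev : ∀ᶠ y : ℂ in 𝓝 x,
          (fun x : ℂ => ((if 0 < x.re then (1 : ℝ) else 0 : ℝ) : ℂ)) y = ((0 : ℝ) : ℂ) := by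
        have hop : IsOpen {y : ℂ | y.re < 0} := isOpen_lt Complex.continuous_re continuous_const
        filter_upwards [hop.mem_nhds hlt] with y hy
        simp [not_lt.mpr (le_of_lt hy)]
      exact Filter.EventuallyEq.continuousAt hev
    · have hev : ∀ᶠ y : ℂ in 𝓝 x,
          (fun x : ℂ => ((if 0 < x.re then (1 : ℝ) else 0 : ℝ) : ℂ)) y = ((1 : ℝ) : ℂ) := by
        have hop : IsOpen {y : ℂ | 0 < y.re} := isOpen_lt continuous_const Complex.continuous_re
        filter_upwards [hop.mem_nhds hgt] with y hy
        simp [hy]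
      exact Filter.EventuallyEq.continuousAt hev
  set HC : C(spectrum ℂ D, ℂ) := ⟨_, hHc.restrict⟩ with hHC
  have target_eq : cfc (fun t : ℝ => if 0 < t then (1 : ℝ) else 0) D = Φ HC := by
    rw [cfc_real_eq_complex _ hD, cfc_eq_cfcL hN hHc]
  -- bound on the real parts
  have hM : ∀ t : spectrum ℂ D, |(t : ℂ).re| ≤ ‖D‖ * ‖(1 : H →L[ℂ] H)‖ := by
    intro t
    have h1 := spectrum.subset_closedBall_norm_mul D t.2
    rw [Metric.mem_closedBall, dist_zero_right] at h1
    exact (Complex.abs_re_le_norm _).trans h1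
  -- evaluation of G
  have evalG : ∀ (R : ℝ) (t : spectrum ℂ D), (G R) t =
      (1 / 2 : ℂ) + (1 / (2 * Real.pi) : ℂ) *
        ∫ z in (-R)..R, ((t : ℂ) + (z : ℂ) * Complex.I)⁻¹ := by
    intro R t
    rw [hG]
    simp only [ContinuousMap.add_apply, ContinuousMap.smul_apply, ContinuousMap.one_apply,
      smul_eq_mul, mul_one]
    congr 1
    congr 1
    have h := (ContinuousMap.evalCLM ℂ t).intervalIntegral_comp_comm (hFI R)
    exact h.symm
  -- uniform bound
  have hGnorm : ∀ R : ℝ, 0 < R →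
      ‖G R - HC‖ ≤ (‖D‖ * ‖(1 : H →L[ℂ] H)‖) / (π * R) := by
    intro R hR
    rw [ContinuousMap.norm_le _ (by positivity)]
    intro t
    have hrne := hre0 t
    rw [ContinuousMap.sub_apply, evalG R t]
    have hHCt : HC t = ((if 0 < (t : ℂ).re then (1 : ℝ) else 0 : ℝ) : ℂ) := rfl
    rw [hHCt]
    have hint : (∫ z in (-R)..R, ((t : ℂ) + (z : ℂ) * Complex.I)⁻¹)
        = ((2 * Real.arctan (R / (t : ℂ).re) : ℝ) : ℂ) := by
      conv_lhs => rw [← hre t]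
      exact aux_integral _ R hrne
    rw [hint]
    have hcast : (1 / 2 : ℂ) + (1 / (2 * (Real.pi : ℂ))) *
          ((2 * Real.arctan (R / (t : ℂ).re) : ℝ) : ℂ) -
          ((if 0 < (t : ℂ).re then (1 : ℝ) else 0 : ℝ) : ℂ)
        = (((1 / 2 + Real.arctan (R / (t : ℂ).re) / π -
            (if 0 < (t : ℂ).re then (1 : ℝ) else 0)) : ℝ) : ℂ) := by
      have hπ : (Real.pi : ℂ) ≠ 0 := by exact_mod_cast Real.pi_ne_zero
      push_cast
      field_simp
    rw [hcast, Complex.norm_real, Real.norm_eq_abs]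
    exact aux_bound _ R _ hR hrne (hM t)
  -- convergence
  have hTG : Tendsto G atTop (𝓝 HC) := by
    rw [tendsto_iff_norm_sub_tendsto_zero]
    apply squeeze_zero' (Eventually.of_forall fun _ => norm_nonneg _)
    · filter_upwards [eventually_gt_atTop 0] with R hR
      exact hGnorm R hR
    · exact Filter.Tendsto.div_atTop tendsto_const_nhds
        (tendsto_id.const_mul_atTop Real.pi_pos)
  have final := (Ψ.continuous.tendsto HC).comp hTG
  have htarget : (cfc (fun t : ℝ => if 0 < t then (1 : ℝ) else 0) D) u = Ψ HC := by
    rw [target_eq]; rfl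
  rw [htarget]
  exact final.congr fun R => (value_eq R).symm
end

section
/- If D is a self-adjoint operator with 0 ∉ σ(D), then for any vector u in the Hilbert space, ∫_{-∞}^{∞} ‖ |D|^{1/2} (D + iz)^{-1} u ‖² dz = π ‖u‖². -/
open MeasureTheory Complex
open scoped InnerProductSpace

lemma scalar_int {r : ℝ} (hr : r ≠ 0) : (∫ z : ℝ, |r| / (r ^ 2 + z ^ 2)) = Real.pi := by
  have habs : (0:ℝ) < |r| := abs_pos.mpr hr
  have h1 : ∀ z : ℝ, |r| / (r ^ 2 + z ^ 2) = |r|⁻¹ * (1 + (z / |r|) ^ 2)⁻¹ := by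
    intro z
    have hd : r ^ 2 + z ^ 2 ≠ 0 := by positivity
    rw [div_pow]
    field_simp
    rw [sq_abs]
  simp_rw [h1]
  rw [MeasureTheory.integral_const_mul]
  rw [Measure.integral_comp_div (fun x : ℝ => (1 + x ^ 2)⁻¹) |r|]
  rw [integral_univ_inv_one_add_sq, _root_.abs_abs, smul_eq_mul, ← mul_assoc,
    inv_mul_cancel₀ habs.ne', one_mul]


/-- If `D` is self-adjoint with `0 ∉ σ(D)`, then for any vector `u`,
`∫_{-∞}^{∞} ‖ |D|^{1/2} (D + iz)⁻¹ u ‖² dz = π ‖u‖²`. -/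
theorem integral_normSq_absRoot_resolvent
    {H : Type*} [NormedAddCommGroup H] [InnerProductSpace ℂ H] [CompleteSpace H]
    (D : H →L[ℂ] H) (hD : IsSelfAdjoint D) (h0 : (0 : ℂ) ∉ spectrum ℂ D) (u : H) :
    ∫ z : ℝ,
        ‖(cfc (fun t : ℝ => Real.sqrt |t|) D)
          ((Ring.inverse (D + ((z : ℂ) * Complex.I) • 1)) u)‖ ^ 2
      = Real.pi * ‖u‖ ^ 2 := by
  have hDn : IsStarNormal D := hD.isStarNormal
  -- spectrum facts
  have hre : ∀ x ∈ spectrum ℂ D, x = (x.re : ℂ) := fun x hx => hD.mem_spectrum_eq_re hx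
  have hre0 : ∀ x ∈ spectrum ℂ D, x.re ≠ 0 := by
    intro x hx h
    apply h0
    rw [hre x hx] at hx
    rw [h] at hx
    simpa using hx
  obtain ⟨ε, hε, hball⟩ : ∃ ε > 0, ∀ x ∈ spectrum ℂ D, ε ≤ ‖x‖ := by
    obtain ⟨ε, hε, hb⟩ := Metric.isOpen_iff.mp (spectrum.isClosed (𝕜 := ℂ) D).isOpen_compl 0 h0
    refine ⟨ε, hε, fun x hx => ?_⟩
    by_contra h
    push_neg at h
    exact hb (by simpa [Metric.mem_ball, dist_eq_norm] using h) hx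
  have hnv : ∀ (z : ℝ), ∀ x ∈ spectrum ℂ D, x + (z : ℂ) * Complex.I ≠ 0 := by
    intro z x hx h
    apply hre0 x hx
    have := congrArg Complex.re h
    simpa using this
  set G : ℝ → ℂ → ℂ := fun z x => ((|x.re| / (x.re ^ 2 + z ^ 2) : ℝ) : ℂ) with hG
  have hGcont : ∀ z : ℝ, ContinuousOn (G z) (spectrum ℂ D) := by
    intro z
    apply Complex.continuous_ofReal.comp_continuousOn
    apply ContinuousOn.div (by fun_prop) (by fun_prop)
    intro x hx
    have := hre0 x hx
    positivity
  -- Step 1: integrand rewrite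
  have hint_eq : ∀ z : ℝ,
      ‖(cfc (fun t : ℝ => Real.sqrt |t|) D)
          ((Ring.inverse (D + ((z : ℂ) * Complex.I) • 1)) u)‖ ^ 2
        = RCLike.re (⟪u, (cfc (G z) D) u⟫_ℂ) := by
    intro z
    have hcont_s : ContinuousOn (fun x : ℂ => ((Real.sqrt |x.re| : ℝ) : ℂ)) (spectrum ℂ D) := by
      fun_prop
    have hcont_inv : ContinuousOn (fun x : ℂ => (x + (z : ℂ) * Complex.I)⁻¹) (spectrum ℂ D) :=
      ContinuousOn.inv₀ (by fun_prop) (hnv z)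
    have hF : ContinuousOn
        (fun x : ℂ => ((Real.sqrt |x.re| : ℝ) : ℂ) * (x + (z : ℂ) * Complex.I)⁻¹)
        (spectrum ℂ D) := hcont_s.mul hcont_inv
    have hScplx : cfc (fun t : ℝ => Real.sqrt |t|) D
        = cfc (fun x : ℂ => ((Real.sqrt |x.re| : ℝ) : ℂ)) D :=
      cfc_real_eq_complex (fun t => Real.sqrt |t|) hD
    have ha1 : cfc (fun x : ℂ => x + (z : ℂ) * Complex.I) D = D + ((z : ℂ) * Complex.I) • 1 := by
      have := cfc_add (a := D) (fun x : ℂ => x) (fun _ => (z : ℂ) * Complex.I)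
        (by fun_prop) (by fun_prop)
      simpa [cfc_id' ℂ D, cfc_const _ _ hDn, Algebra.algebraMap_eq_smul_one] using this
    have hb1 : Ring.inverse (D + ((z : ℂ) * Complex.I) • 1)
        = cfc (fun x : ℂ => (x + (z : ℂ) * Complex.I)⁻¹) D := by
      rw [← ha1]
      exact (cfc_inv (fun x : ℂ => x + (z : ℂ) * Complex.I) D (hnv z) (by fun_prop) hDn).symm
    have hcomb : (cfc (fun t : ℝ => Real.sqrt |t|) D)
          ((Ring.inverse (D + ((z : ℂ) * Complex.I) • 1)) u)
        = (cfc (fun x : ℂ => ((Real.sqrt |x.re| : ℝ) : ℂ) * (x + (z : ℂ) * Complex.I)⁻¹) D) u := by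
      rw [hScplx, hb1, ← ContinuousLinearMap.mul_apply, ← cfc_mul _ _ D hcont_s hcont_inv]
    have hstar : star (cfc (fun x : ℂ => ((Real.sqrt |x.re| : ℝ) : ℂ)
            * (x + (z : ℂ) * Complex.I)⁻¹) D)
          * cfc (fun x : ℂ => ((Real.sqrt |x.re| : ℝ) : ℂ) * (x + (z : ℂ) * Complex.I)⁻¹) D
        = cfc (G z) D := by
      rw [← cfc_star _ D, ← cfc_mul _ _ D hF.star hF]
      apply cfc_congr
      intro x hx
      have hr0 : x.re ≠ 0 := hre0 x hx
      have hxre : x = (x.re : ℂ) := hre x hx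
      obtain ⟨r, hr0', rfl⟩ : ∃ r : ℝ, r ≠ 0 ∧ x = (r : ℂ) := ⟨x.re, hr0, hxre⟩
      simp only [hG, Complex.ofReal_re]
      have hconj : star ((r : ℂ) + (z : ℂ) * Complex.I) = (r : ℂ) - (z : ℂ) * Complex.I := by
        simp [Complex.ext_iff]
      have h1 : ((r : ℂ) - (z : ℂ) * Complex.I) * ((r : ℂ) + (z : ℂ) * Complex.I)
          = ((r ^ 2 + z ^ 2 : ℝ) : ℂ) := by
        push_cast
        linear_combination (-(z : ℂ) ^ 2) * Complex.I_sq
      have hs : ((|r| : ℝ) : ℂ) = (Real.sqrt |r| : ℂ) * (Real.sqrt |r| : ℂ) := by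
        rw [← Complex.ofReal_mul, Real.mul_self_sqrt (abs_nonneg r)]
      rw [star_mul', star_inv₀, hconj, Complex.star_def, Complex.conj_ofReal]
      rw [div_eq_mul_inv, Complex.ofReal_mul, Complex.ofReal_inv, hs, ← h1, mul_inv]
      ring
    rw [hcomb, ← hstar, ContinuousLinearMap.mul_apply, ContinuousLinearMap.star_eq_adjoint,
      ContinuousLinearMap.adjoint_inner_right]
    exact (inner_self_eq_norm_sq (𝕜 := ℂ) _).symm
  -- bound and integrability
  set M : ℝ := ‖D‖ * ‖(1 : H →L[ℂ] H)‖ with hM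
  set bound : ℝ → ℝ := fun z => M * (ε ^ 2 + z ^ 2)⁻¹ with hbound_def
  have hbound_int : Integrable bound := by
    have h1 : Integrable (fun z : ℝ => ((1 : ℝ) + (z / ε) ^ 2)⁻¹) :=
      integrable_inv_one_add_sq.comp_div hε.ne'
    have h2 := (h1.const_mul ((ε ^ 2)⁻¹)).const_mul M
    refine h2.congr (Filter.Eventually.of_forall fun z => ?_)
    show M * ((ε ^ 2)⁻¹ * (1 + (z / ε) ^ 2)⁻¹) = M * (ε ^ 2 + z ^ 2)⁻¹
    congr 1
    rw [div_pow, ← mul_inv]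
    congr 1
    field_simp
  have hGb : ∀ (z : ℝ), ∀ x ∈ spectrum ℂ D, ‖G z x‖ ≤ ‖bound z‖ := by
    intro z x hx
    have hxre : x = (x.re : ℂ) := hre x hx
    have hnx : ‖x‖ = |x.re| := by rw [hxre, Complex.norm_real, Real.norm_eq_abs, Complex.ofReal_re]
    have hle : |x.re| ≤ M := hnx ▸ spectrum.norm_le_norm_mul_of_mem hx
    have hM0 : (0:ℝ) ≤ M := mul_nonneg (norm_nonneg _) (norm_nonneg _)
    have hε2 : ε ^ 2 + z ^ 2 ≤ x.re ^ 2 + z ^ 2 := by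
      have : ε ≤ |x.re| := hnx ▸ hball x hx
      nlinarith [abs_nonneg x.re, _root_.sq_abs x.re]
    have hpos : (0:ℝ) < ε ^ 2 + z ^ 2 := by positivity
    have h1 : ‖G z x‖ = |x.re| / (x.re ^ 2 + z ^ 2) := by
      rw [hG]
      simp only [Complex.norm_real, Real.norm_eq_abs]
      exact abs_of_nonneg (by positivity)
    rw [h1]
    calc |x.re| / (x.re ^ 2 + z ^ 2) ≤ M / (ε ^ 2 + z ^ 2) :=
          div_le_div₀ hM0 hle hpos hε2
      _ = bound z := by rw [hbound_def, div_eq_mul_inv]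
      _ ≤ ‖bound z‖ := le_abs_self _
  -- integrability of the operator family
  set fc : ℝ → C(spectrum ℂ D, ℂ) := fun z => ⟨_, (hGcont z).restrict⟩ with hfc_def
  have huncurry : Continuous (fun p : ℝ × (spectrum ℂ D) => G p.1 (p.2 : ℂ)) := by
    apply Complex.continuous_ofReal.comp
    apply Continuous.div (by fun_prop) (by fun_prop)
    intro p
    have := hre0 p.2 p.2.2
    positivity
  have hfc_cont : Continuous fc := by
    have : fc = fun z => (ContinuousMap.curry ⟨_, huncurry⟩) z := by
      ext z x; rfl
    rw [this]
    exact (ContinuousMap.curry _).continuous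
  have hfc_int : Integrable fc := by
    refine ⟨hfc_cont.aestronglyMeasurable, ?_⟩
    refine hbound_int.hasFiniteIntegral.mono (Filter.Eventually.of_forall fun z => ?_)
    rw [ContinuousMap.norm_le _ (norm_nonneg (bound z))]
    exact fun x => hGb z x.1 x.2
  have hcfc_eq : ∀ z : ℝ, cfc (G z) D = cfcL (R := ℂ) hDn (fc z) := by
    intro z
    rw [cfc_apply (G z) D hDn (hGcont z), cfcL_apply]
  have hT_int : Integrable (fun z => cfc (G z) D) := by
    simp_rw [hcfc_eq]
    exact (cfcL (R := ℂ) hDn).integrable_comp hfc_int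
  -- swap the integral with cfc
  have hswap : (∫ z : ℝ, cfc (G z) D) = cfc (fun x : ℂ => ∫ z : ℝ, G z x) D := by
    refine (cfc_integral G (fun z => ‖bound z‖) D ?_ (Filter.Eventually.of_forall hGb)
      hbound_int.norm.hasFiniteIntegral hDn).symm
    show ContinuousOn (fun p : ℝ × ℂ => ((|p.2.re| / (p.2.re ^ 2 + p.1 ^ 2) : ℝ) : ℂ)) _
    apply Complex.continuous_ofReal.comp_continuousOn
    apply ContinuousOn.div (by fun_prop) (by fun_prop)
    intro p hp
    have := hre0 p.2 hp.2
    positivity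
  -- the pointwise integral is constant π on the spectrum
  have hconst : cfc (fun x : ℂ => ∫ z : ℝ, G z x) D = cfc (fun _ : ℂ => (Real.pi : ℂ)) D := by
    apply cfc_congr
    intro x hx
    have hr := hre0 x hx
    simp only [hG]
    have h2 := integral_ofReal (𝕜 := ℂ) (μ := (volume : Measure ℝ))
      (f := fun z : ℝ => |x.re| / (x.re ^ 2 + z ^ 2))
    exact h2.trans (congrArg Complex.ofReal (scalar_int hr))
  -- put everything together
  calc ∫ z : ℝ, ‖(cfc (fun t : ℝ => Real.sqrt |t|) D)
          ((Ring.inverse (D + ((z : ℂ) * Complex.I) • 1)) u)‖ ^ 2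
      = ∫ z : ℝ, RCLike.re (⟪u, (cfc (G z) D) u⟫_ℂ) :=
        integral_congr_ae (Filter.Eventually.of_forall hint_eq)
    _ = RCLike.re (∫ z : ℝ, ⟪u, (cfc (G z) D) u⟫_ℂ) := by
        refine integral_re ?_
        exact (innerSL ℂ u).integrable_comp (hT_int.apply_continuousLinearMap u)
    _ = RCLike.re (⟪u, (∫ z : ℝ, cfc (G z) D) u⟫_ℂ) := by
        rw [ContinuousLinearMap.integral_apply hT_int,
          integral_inner (hT_int.apply_continuousLinearMap u)]
    _ = Real.pi * ‖u‖ ^ 2 := by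
        rw [hswap, hconst, cfc_const _ _ hDn, Algebra.algebraMap_eq_smul_one]
        simp only [ContinuousLinearMap.smul_apply, ContinuousLinearMap.one_apply,
          inner_smul_right, inner_self_eq_norm_sq_to_K, ← RCLike.ofReal_pow]
        show ((Real.pi : ℂ) * ((‖u‖ ^ 2 : ℝ) : ℂ)).re = Real.pi * ‖u‖ ^ 2
        rw [← Complex.ofReal_mul, Complex.ofReal_re]
end

section
/- Let D₁ and D₂ be self-adjoint operators with common domain, 0 in neither spectrum, such that D₂ = D₁ + A with A bounded. Then the difference of positive spectral projections is given by 1_{(0,∞)}(D₂) − 1_{(0,∞)}(D₁) = −(1/2π) ∫_{−∞}^{∞} (D₁+iz)^{-1} A (D₂+iz)^{-1} dz, with the integral converging strongly. -/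
open MeasureTheory Filter Topology

/-- The spectral projection `1_{(0,∞)}(D)` via continuous functional calculus. -/
noncomputable def posSpectralProj {H : Type*} [NormedAddCommGroup H]
    [InnerProductSpace ℂ H] [CompleteSpace H] (D : H →L[ℂ] H) : H →L[ℂ] H :=
  cfc (fun t : ℝ => if 0 < t then (1 : ℝ) else 0) D

namespace SpectralAux

open Complex

variable {H : Type*} [NormedAddCommGroup H] [InnerProductSpace ℂ H] [CompleteSpace H]
variable {D : H →L[ℂ] H}

lemma spec_ne (hD : IsSelfAdjoint D) (h0 : (0:ℂ) ∉ spectrum ℂ D) (z : ℝ) :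
    ∀ w ∈ spectrum ℂ D, w + (z : ℂ) * I ≠ 0 := by
  intro w hw h
  have hre := hD.mem_spectrum_eq_re hw
  have him : w.im = 0 := by rw [hre]; simp
  have hz : z = 0 := by
    have := congrArg Complex.im h
    simpa [him] using this
  have hwre : w.re = 0 := by
    have := congrArg Complex.re h
    simpa [hz] using this
  apply h0
  have : w = 0 := by rw [hre, hwre]; simp
  rwa [this] at hw

lemma contOn (hD : IsSelfAdjoint D) (h0 : (0:ℂ) ∉ spectrum ℂ D) (z : ℝ) :
    ContinuousOn (fun w : ℂ => (w + (z:ℂ)*I)⁻¹) (spectrum ℂ D) :=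
  ContinuousOn.inv₀ (by fun_prop) (spec_ne hD h0 z)

lemma exists_delta (h0 : (0:ℂ) ∉ spectrum ℂ D) :
    ∃ δ : ℝ, 0 < δ ∧ ∀ w ∈ spectrum ℂ D, δ ≤ ‖w‖ := by
  have hcl : IsClosed (spectrum ℂ D) := spectrum.isClosed D
  have : (spectrum ℂ D)ᶜ ∈ 𝓝 (0:ℂ) := hcl.isOpen_compl.mem_nhds h0
  obtain ⟨δ, hδ, hball⟩ := Metric.mem_nhds_iff.mp this
  refine ⟨δ/2, by positivity, fun w hw => ?_⟩
  by_contra hlt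
  push_neg at hlt
  exact hball (by simpa [Metric.mem_ball, dist_zero_right] using hlt.trans (by linarith)) hw

/-- the resolvent as a continuous-map–valued function -/
noncomputable def fc (hD : IsSelfAdjoint D) (h0 : (0:ℂ) ∉ spectrum ℂ D) (z : ℝ) :
    C(spectrum ℂ D, ℂ) :=
  ⟨_, (contOn hD h0 z).restrict⟩

lemma cont_uncurry (hD : IsSelfAdjoint D) (h0 : (0:ℂ) ∉ spectrum ℂ D) :
    Continuous (Function.uncurry fun (z : ℝ) (w : spectrum ℂ D) => ((w:ℂ) + (z:ℂ)*I)⁻¹) := by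
  apply Continuous.inv₀
  · fun_prop
  · rintro ⟨z, w⟩
    exact spec_ne hD h0 z w w.2

lemma cont_fc (hD : IsSelfAdjoint D) (h0 : (0:ℂ) ∉ spectrum ℂ D) :
    Continuous (fc hD h0) :=
  ContinuousMap.continuous_of_continuous_uncurry _ (cont_uncurry hD h0)

noncomputable def resUnit (hD : IsSelfAdjoint D) (h0 : (0:ℂ) ∉ spectrum ℂ D) (z : ℝ) :
    (H →L[ℂ] H)ˣ where
  val := D + ((z:ℂ)*I) • 1
  inv := cfc (fun w : ℂ => (w + (z:ℂ)*I)⁻¹) D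
  val_inv := by
    have hc := contOn hD h0 z
    have h1 : cfc (fun w : ℂ => w + (z:ℂ)*I) D = D + ((z:ℂ)*I) • 1 := by
      rw [cfc_add_const ((z:ℂ)*I) (fun w => w) D (by fun_prop) hD.isStarNormal,
        cfc_id' ℂ D, Algebra.algebraMap_eq_smul_one]
    rw [← h1, ← cfc_mul _ _ D (by fun_prop) hc]
    rw [cfc_congr (g := fun _ => (1:ℂ)) fun w hw => mul_inv_cancel₀ (spec_ne hD h0 z w hw)]
    exact cfc_const_one ℂ D
  inv_val := by
    have hc := contOn hD h0 z
    have h1 : cfc (fun w : ℂ => w + (z:ℂ)*I) D = D + ((z:ℂ)*I) • 1 := by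
      rw [cfc_add_const ((z:ℂ)*I) (fun w => w) D (by fun_prop) hD.isStarNormal,
        cfc_id' ℂ D, Algebra.algebraMap_eq_smul_one]
    rw [← h1, ← cfc_mul _ _ D hc (by fun_prop)]
    rw [cfc_congr (g := fun _ => (1:ℂ)) fun w hw => inv_mul_cancel₀ (spec_ne hD h0 z w hw)]
    exact cfc_const_one ℂ D

lemma ringInverse_eq_cfc (hD : IsSelfAdjoint D) (h0 : (0:ℂ) ∉ spectrum ℂ D) (z : ℝ) :
    Ring.inverse (D + ((z:ℂ)*I) • (1 : H →L[ℂ] H)) = cfc (fun w : ℂ => (w + (z:ℂ)*I)⁻¹) D :=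
  Ring.inverse_unit (resUnit hD h0 z)

lemma cont_res (hD : IsSelfAdjoint D) (h0 : (0:ℂ) ∉ spectrum ℂ D) :
    Continuous (fun z : ℝ => Ring.inverse (D + ((z:ℂ)*I) • (1 : H →L[ℂ] H))) := by
  have heq : (fun z : ℝ => Ring.inverse (D + ((z:ℂ)*I) • (1 : H →L[ℂ] H)))
      = fun z => cfcL (R := ℂ) hD.isStarNormal (fc hD h0 z) := by
    funext z
    rw [ringInverse_eq_cfc hD h0 z, cfc_eq_cfcL hD.isStarNormal (contOn hD h0 z)]
    rfl
  rw [heq]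
  exact (cfcL (R := ℂ) hD.isStarNormal).continuous.comp (cont_fc hD h0)


lemma denom_ne (t : ℝ) (ht : t ≠ 0) (z : ℝ) : ((t:ℂ) + z * I) ≠ 0 := by
  intro h
  have := congrArg Complex.re h
  simp at this
  exact ht this

lemma cont_denom (t : ℝ) (ht : t ≠ 0) : Continuous (fun z : ℝ => ((t:ℂ) + z * I)⁻¹) :=
  Continuous.inv₀ (by fun_prop) (denom_ne t ht)

lemma scalar_integral (t : ℝ) (ht : t ≠ 0) (R : ℝ) :
    ∫ z in (-R)..R, ((t:ℂ) + z * I)⁻¹ = ((2 * Real.arctan (R / t) : ℝ) : ℂ) := by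
  have hts : ∀ z : ℝ, t^2 + z^2 ≠ 0 := fun z => by positivity
  set G : ℝ → ℂ := fun z => (Real.arctan (z/t) : ℂ) - (I/2) * (Real.log (t^2 + z^2) : ℂ) with hG
  have hderiv : ∀ z : ℝ, HasDerivAt G (((t:ℂ) + z * I)⁻¹) z := by
    intro z
    have g1 : HasDerivAt (fun z : ℝ => Real.arctan (z/t)) ((1/(1+(z/t)^2)) * (1/t)) z := by
      have := (Real.hasDerivAt_arctan (z/t)).comp z ((hasDerivAt_id z).div_const t)
      simpa [Function.comp_def] using this
    have g2 : HasDerivAt (fun z : ℝ => Real.log (t^2 + z^2)) ((t^2+z^2)⁻¹ * (2*z)) z := by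
      have inner : HasDerivAt (fun z : ℝ => t^2 + z^2) (2*z) z := by
        simpa using ((hasDerivAt_pow 2 z).const_add (t^2))
      exact (Real.hasDerivAt_log (hts z)).comp z inner
    have gd : HasDerivAt G
        ((((1/(1+(z/t)^2)) * (1/t) : ℝ) : ℂ) - (I/2) * (((t^2+z^2)⁻¹ * (2*z) : ℝ) : ℂ)) z :=
      (g1.ofReal_comp).sub ((g2.ofReal_comp).const_mul (I/2))
    convert gd using 1
    have ht' : (t:ℂ) ≠ 0 := by exact_mod_cast ht
    have h2 : ((1:ℂ)+((z:ℂ)/t)^2) ≠ 0 := by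
      have : ((1 + (z/t)^2 : ℝ) : ℂ) ≠ 0 := by
        exact_mod_cast (by positivity : (1 + (z/t)^2 : ℝ) ≠ 0)
      push_cast at this
      convert this using 2
    have h3 : ((t:ℂ)^2+(z:ℂ)^2) ≠ 0 := by
      have : ((t^2 + z^2 : ℝ) : ℂ) ≠ 0 := by exact_mod_cast hts z
      push_cast at this
      exact this
    symm
    refine eq_inv_of_mul_eq_one_left ?_
    push_cast
    field_simp
    ring_nf
    simp only [Complex.I_sq]
    ring
  have hint : IntervalIntegrable (fun z : ℝ => ((t:ℂ) + z * I)⁻¹) volume (-R) R :=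
    (cont_denom t ht).intervalIntegrable _ _
  rw [intervalIntegral.integral_eq_sub_of_hasDerivAt (fun x _ => hderiv x) hint]
  simp only [hG]
  have e1 : ((-R)/t) = -(R/t) := by ring
  rw [e1, Real.arctan_neg]
  have e2 : ((-R:ℝ))^2 = R^2 := by ring
  rw [e2]
  push_cast
  ring


lemma integral_res (hD : IsSelfAdjoint D) (h0 : (0:ℂ) ∉ spectrum ℂ D) {R : ℝ} (hR : 0 ≤ R) :
    ∫ z in (-R)..R, Ring.inverse (D + ((z:ℂ)*I) • (1 : H →L[ℂ] H))
      = cfc (fun w : ℂ => ((2 * Real.arctan (R / w.re) : ℝ) : ℂ)) D := by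
  obtain ⟨δ, hδ, hdel⟩ := exists_delta h0
  have hle : -R ≤ R := by linarith
  set μ : Measure ℝ := volume.restrict (Set.Ioc (-R) R) with hμ
  have : IsFiniteMeasure μ := ⟨by rw [Measure.restrict_apply_univ]; exact measure_Ioc_lt_top⟩
  have hbound : ∀ z : ℝ, ∀ w ∈ spectrum ℂ D, ‖(w + (z:ℂ)*I)⁻¹‖ ≤ ‖δ⁻¹‖ := by
    intro z w hw
    have hre := hD.mem_spectrum_eq_re hw
    have h1 : |w.re| ≤ ‖w + (z:ℂ)*I‖ := by
      have := Complex.abs_re_le_norm (w + (z:ℂ)*I)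
      simpa using this
    have h2 : δ ≤ |w.re| := by
      have := hdel w hw
      rwa [hre, Complex.norm_real, Real.norm_eq_abs] at this
    rw [norm_inv, Real.norm_eq_abs, abs_of_pos (by positivity)]
    exact inv_anti₀ hδ (h2.trans h1)
  have hexch := cfc_integral (μ := μ) (fun (z:ℝ) (w:ℂ) => (w + (z:ℂ)*I)⁻¹)
    (fun _ => δ⁻¹) D (by
      show ContinuousOn (fun p : ℝ × ℂ => (p.2 + (p.1:ℂ)*I)⁻¹) _
      apply ContinuousOn.inv₀ (by fun_prop)
      rintro ⟨z, w⟩ ⟨-, hw⟩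
      exact spec_ne hD h0 z w hw) (.of_forall fun z w hw => (hbound z w hw).trans_eq (by rw [Real.norm_eq_abs, abs_of_pos (inv_pos.mpr hδ)]))
    (hasFiniteIntegral_const _) hD.isStarNormal
  rw [intervalIntegral.integral_of_le hle]
  rw [show (∫ z in Set.Ioc (-R) R, Ring.inverse (D + ((z:ℂ)*I) • (1 : H →L[ℂ] H)))
      = ∫ z, cfc (fun w : ℂ => (w + (z:ℂ)*I)⁻¹) D ∂μ from
    integral_congr_ae (.of_forall fun z => ringInverse_eq_cfc hD h0 z)]
  rw [← hexch]
  apply cfc_congr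
  intro w hw
  have hre := hD.mem_spectrum_eq_re hw
  have hne : w.re ≠ 0 := by
    intro h
    apply h0
    rw [show w = 0 by rw [hre, h]; simp] at hw
    exact hw
  have := scalar_integral w.re hne R
  rw [intervalIntegral.integral_of_le hle] at this
  calc (∫ z, (w + (z:ℂ)*I)⁻¹ ∂μ) = ∫ z in Set.Ioc (-R) R, ((w.re : ℂ) + (z:ℂ)*I)⁻¹ := by
        rw [hμ]; exact integral_congr_ae (.of_forall fun z => by rw [← hre])
    _ = _ := this

lemma contOn_ind (hD : IsSelfAdjoint D) (h0 : (0:ℂ) ∉ spectrum ℂ D) :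
    ContinuousOn (fun w : ℂ => if 0 < w.re then (1:ℂ) else 0) (spectrum ℂ D) := by
  intro w hw
  apply ContinuousAt.continuousWithinAt
  have hre := hD.mem_spectrum_eq_re hw
  have hne : w.re ≠ 0 := by
    intro h
    apply h0
    rw [show w = 0 by rw [hre, h]; simp] at hw
    exact hw
  rcases hne.lt_or_gt with hneg | hpos
  · have hev : ∀ᶠ x in 𝓝 w, (if 0 < x.re then (1:ℂ) else 0) = 0 := by
      have hopen : IsOpen {x : ℂ | x.re < 0} := isOpen_lt Complex.continuous_re continuous_const
      filter_upwards [hopen.mem_nhds hneg] with x hx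
      rw [if_neg (by simp at hx ⊢; linarith)]
    exact Filter.EventuallyEq.continuousAt hev
  · have hev : ∀ᶠ x in 𝓝 w, (if 0 < x.re then (1:ℂ) else 0) = 1 := by
      have hopen : IsOpen {x : ℂ | 0 < x.re} := isOpen_lt continuous_const Complex.continuous_re
      filter_upwards [hopen.mem_nhds hpos] with x hx
      rw [if_pos hx]
    exact Filter.EventuallyEq.continuousAt hev

lemma contOn_arc (hD : IsSelfAdjoint D) (h0 : (0:ℂ) ∉ spectrum ℂ D) (R : ℝ) :
    ContinuousOn (fun w : ℂ => ((2 * Real.arctan (R / w.re) : ℝ) : ℂ)) (spectrum ℂ D) := by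
  have hne : ∀ w ∈ spectrum ℂ D, w.re ≠ 0 := by
    intro w hw h
    apply h0
    have hre := hD.mem_spectrum_eq_re hw
    rw [show w = 0 by rw [hre, h]; simp] at hw
    exact hw
  apply Complex.continuous_ofReal.comp_continuousOn
  apply ContinuousOn.mul continuousOn_const
  apply Real.continuous_arctan.comp_continuousOn
  exact ContinuousOn.div continuousOn_const Complex.continuous_re.continuousOn hne

lemma proj_eq (hD : IsSelfAdjoint D) :
    posSpectralProj D = cfc (fun w : ℂ => if 0 < w.re then (1:ℂ) else 0) D := by
  rw [posSpectralProj, cfc_real_eq_complex _ hD]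
  congr 1
  funext x
  rw [apply_ite (fun r : ℝ => (r : ℂ))]
  simp

lemma key_op (hD : IsSelfAdjoint D) (h0 : (0:ℂ) ∉ spectrum ℂ D) :
    Tendsto (fun R : ℝ => ((1 / (2 * (Real.pi:ℂ))) : ℂ) •
        ∫ z in (-R)..R, Ring.inverse (D + ((z:ℂ)*I) • (1 : H →L[ℂ] H)))
      atTop (𝓝 (posSpectralProj D - ((1/2 : ℂ)) • 1)) := by
  have hπ := Real.pi_pos
  set M : ℝ := ‖D‖ + 1 with hM
  have hM0 : 0 < M := by positivity
  set c : ℝ → ℝ := fun R => (1/Real.pi) * (Real.pi/2 - Real.arctan (R / M)) with hc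
  have hc0 : Tendsto c atTop (𝓝 0) := by
    have h1 : Tendsto (fun R : ℝ => R / M) atTop atTop :=
      Tendsto.atTop_div_const hM0 tendsto_id
    have h2 : Tendsto (fun R : ℝ => Real.arctan (R / M)) atTop (𝓝 (Real.pi/2)) :=
      (Real.tendsto_arctan_atTop.mono_right nhdsWithin_le_nhds).comp h1
    have := ((tendsto_const_nhds (x := Real.pi/2)).sub h2).const_mul (1/Real.pi)
    simpa [hc, one_div] using this
  rw [tendsto_iff_norm_sub_tendsto_zero]
  apply squeeze_zero' (Eventually.of_forall fun R => norm_nonneg _) _ hc0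
  filter_upwards [eventually_ge_atTop (0:ℝ)] with R hR
  -- rewrite everything as a single cfc
  have harc := contOn_arc hD h0 R
  have hind := contOn_ind hD h0
  have e1 : ((1 / (2 * (Real.pi:ℂ))) : ℂ) •
        ∫ z in (-R)..R, Ring.inverse (D + ((z:ℂ)*I) • (1 : H →L[ℂ] H))
      = cfc (fun w : ℂ => (1 / (2 * (Real.pi:ℂ))) * ((2 * Real.arctan (R / w.re) : ℝ) : ℂ)) D := by
    rw [integral_res hD h0 hR, ← cfc_const_mul _ _ D harc]
  have e2 : posSpectralProj D - ((1/2 : ℂ)) • 1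
      = cfc (fun w : ℂ => (if 0 < w.re then (1:ℂ) else 0) - (1/2 : ℂ)) D := by
    rw [cfc_sub _ _ D hind continuousOn_const, ← proj_eq hD, cfc_const _ _ hD.isStarNormal,
      Algebra.algebraMap_eq_smul_one]
  have hf1 : ContinuousOn (fun w : ℂ => (1/(2*(Real.pi:ℂ))) * ((2*Real.arctan (R/w.re) : ℝ) : ℂ))
      (spectrum ℂ D) := continuousOn_const.mul harc
  have hf2 : ContinuousOn (fun w : ℂ => (if 0 < w.re then (1:ℂ) else 0) - (1/2:ℂ))
      (spectrum ℂ D) := hind.sub continuousOn_const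
  rw [e1, e2, ← cfc_sub _ _ D hf1 hf2]
  have hcR : 0 ≤ c R := by
    have h' := (Real.arctan_lt_pi_div_two (R / M)).le
    simp only [hc]
    apply mul_nonneg (by positivity) (by linarith)
  apply norm_cfc_le hcR
  intro w hw
  have hre := hD.mem_spectrum_eq_re hw
  set t : ℝ := w.re with htdef
  have hne : t ≠ 0 := by
    intro h
    apply h0
    rw [show w = 0 by rw [hre, h]; simp] at hw
    exact hw
  have htM : |t| ≤ M := by
    have h1 : ‖w‖ ≤ ‖D‖ * ‖(1 : H →L[ℂ] H)‖ := spectrum.norm_le_norm_mul_of_mem hw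
    have h2 : ‖(1 : H →L[ℂ] H)‖ ≤ 1 := ContinuousLinearMap.norm_id_le
    have h3 : ‖D‖ * ‖(1 : H →L[ℂ] H)‖ ≤ ‖D‖ * 1 :=
      mul_le_mul_of_nonneg_left h2 (norm_nonneg D)
    have h4 : ‖w‖ = |t| := by rw [hre]; simp
    rw [hM]; nlinarith [h4 ▸ h1]
  -- the value is a real number
  have hval : (1 / (2 * (Real.pi:ℂ))) * ((2 * Real.arctan (R / t) : ℝ) : ℂ)
        - ((if 0 < w.re then (1:ℂ) else 0) - (1/2 : ℂ))
      = (((1/Real.pi) * Real.arctan (R / t)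
          - ((if 0 < t then (1:ℝ) else 0) - (1/2:ℝ)) : ℝ) : ℂ) := by
    push_cast
    rw [apply_ite (fun r : ℝ => (r : ℂ))]
    have hπc : ((Real.pi:ℂ)) ≠ 0 := by exact_mod_cast hπ.ne'
    rw [← htdef]
    push_cast
    field_simp
  rw [hval, Complex.norm_real, Real.norm_eq_abs]
  -- now a real estimate
  have habs : 0 < |t| := abs_pos.mpr hne
  have harcle : Real.arctan (R / M) ≤ Real.arctan (R / |t|) := by
    apply Real.arctan_strictMono.monotone
    exact div_le_div_of_nonneg_left hR habs htM
  set a : ℝ := Real.arctan (R / |t|) with hadef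
  have ha2 : a ≤ Real.pi/2 := (Real.arctan_lt_pi_div_two _).le
  have ha0 : 0 ≤ a := by rw [← Real.arctan_zero]; exact Real.arctan_strictMono.monotone (by positivity)
  have hmul : (1/Real.pi) * Real.arctan (R/M) ≤ (1/Real.pi) * a :=
    mul_le_mul_of_nonneg_left harcle (by positivity)
  have hpi2 : (1/Real.pi) * (Real.pi/2) = 1/2 := by field_simp
  simp only [hc]
  rcases hne.lt_or_gt with hneg | hpos
  · rw [if_neg (not_lt.mpr hneg.le)]
    have heq : Real.arctan (R / t) = -a := by
      rw [hadef, abs_of_neg hneg, ← Real.arctan_neg]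
      congr 1
      rw [div_neg, neg_neg]
    rw [heq]
    rw [_root_.abs_of_nonneg (by nlinarith)]
    nlinarith
  · rw [if_pos hpos]
    have heq : Real.arctan (R / t) = a := by rw [hadef, abs_of_pos hpos]
    rw [heq]
    rw [_root_.abs_of_nonpos (by nlinarith)]
    nlinarith


lemma key_vec (hD : IsSelfAdjoint D) (h0 : (0:ℂ) ∉ spectrum ℂ D) (u : H) :
    Tendsto (fun R : ℝ => ((1 / (2 * (Real.pi:ℂ))) : ℂ) •
        ∫ z in (-R)..R, Ring.inverse (D + ((z:ℂ)*I) • (1 : H →L[ℂ] H)) u)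
      atTop (𝓝 (posSpectralProj D u - ((1/2 : ℂ)) • u)) := by
  have hkey := key_op hD h0
  have happ : Continuous (fun T : H →L[ℂ] H => T u) :=
    (ContinuousLinearMap.apply ℂ H u).continuous
  have h2 := (happ.tendsto _).comp hkey
  have heq : (fun R : ℝ => (fun T : H →L[ℂ] H => T u) (((1 / (2 * (Real.pi:ℂ))) : ℂ) •
        ∫ z in (-R)..R, Ring.inverse (D + ((z:ℂ)*I) • (1 : H →L[ℂ] H))))
      = fun R : ℝ => ((1 / (2 * (Real.pi:ℂ))) : ℂ) •
        ∫ z in (-R)..R, Ring.inverse (D + ((z:ℂ)*I) • (1 : H →L[ℂ] H)) u := by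
    funext R
    show (((1 / (2 * (Real.pi:ℂ))) : ℂ) •
        ∫ z in (-R)..R, Ring.inverse (D + ((z:ℂ)*I) • (1 : H →L[ℂ] H))) u = _
    rw [ContinuousLinearMap.smul_apply]
    congr 1
    exact (ContinuousLinearMap.apply ℂ H u).intervalIntegral_comp_comm
      ((cont_res hD h0).intervalIntegrable _ _) |>.symm
  rw [Function.comp_def, heq] at h2
  simpa [ContinuousLinearMap.sub_apply, ContinuousLinearMap.smul_apply,
    ContinuousLinearMap.one_apply] using h2

end SpectralAux

open SpectralAux
open Complex

/-- Resolvent formula for the difference of positive spectral projections: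
if `D₁, D₂` are self-adjoint with `0` in neither spectrum and `D₂ = D₁ + A`
with `A` bounded, then
`1_{(0,∞)}(D₂) − 1_{(0,∞)}(D₁) = −(1/2π)∫ (D₁+iz)⁻¹ A (D₂+iz)⁻¹ dz`,
with the integral converging strongly (as a symmetric principal value). -/
theorem spectral_projection_difference_resolvent_formula
    {H : Type*} [NormedAddCommGroup H] [InnerProductSpace ℂ H] [CompleteSpace H]
    (D₁ D₂ A : H →L[ℂ] H) (hD₁ : IsSelfAdjoint D₁) (hD₂ : IsSelfAdjoint D₂)
    (h₁ : (0 : ℂ) ∉ spectrum ℂ D₁) (h₂ : (0 : ℂ) ∉ spectrum ℂ D₂)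
    (hA : D₂ = D₁ + A) (u : H) :
    Tendsto
      (fun R : ℝ => (-(1 / (2 * Real.pi)) : ℂ) •
        ∫ z in (-R)..R,
          (Ring.inverse (D₁ + ((z : ℂ) * Complex.I) • 1))
            (A ((Ring.inverse (D₂ + ((z : ℂ) * Complex.I) • 1)) u)))
      atTop
      (𝓝 ((posSpectralProj D₂) u - (posSpectralProj D₁) u)) := by
  have hptwise : ∀ z : ℝ,
      Ring.inverse (D₁ + ((z:ℂ)*I) • (1 : H →L[ℂ] H))
          (A (Ring.inverse (D₂ + ((z:ℂ)*I) • (1 : H →L[ℂ] H)) u))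
        = Ring.inverse (D₁ + ((z:ℂ)*I) • (1 : H →L[ℂ] H)) u
          - Ring.inverse (D₂ + ((z:ℂ)*I) • (1 : H →L[ℂ] H)) u := by
    intro z
    set u₁ := SpectralAux.resUnit hD₁ h₁ z with hu₁
    set u₂ := SpectralAux.resUnit hD₂ h₂ z with hu₂
    have e₁ : Ring.inverse (D₁ + ((z:ℂ)*I) • (1 : H →L[ℂ] H)) = ↑u₁⁻¹ :=
      Ring.inverse_unit u₁
    have e₂ : Ring.inverse (D₂ + ((z:ℂ)*I) • (1 : H →L[ℂ] H)) = ↑u₂⁻¹ :=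
      Ring.inverse_unit u₂
    have hop : ((↑u₁⁻¹ : H →L[ℂ] H) * A) * ↑u₂⁻¹ = ↑u₁⁻¹ - ↑u₂⁻¹ := by
      have hAview : A = (↑u₂ : H →L[ℂ] H) - ↑u₁ := by
        show A = (D₂ + ((z:ℂ)*I) • 1) - (D₁ + ((z:ℂ)*I) • 1)
        rw [hA]; abel
      rw [hAview, mul_sub, sub_mul, mul_assoc, Units.mul_inv, mul_one, Units.inv_mul, one_mul]
    rw [e₁, e₂]
    have := congrArg (fun T : H →L[ℂ] H => T u) hop
    simpa [ContinuousLinearMap.mul_apply, ContinuousLinearMap.sub_apply] using this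
  have hint : ∀ (D : H →L[ℂ] H) (hD : IsSelfAdjoint D) (h0 : (0:ℂ) ∉ spectrum ℂ D) (R : ℝ),
      IntervalIntegrable (fun z : ℝ => Ring.inverse (D + ((z:ℂ)*I) • (1 : H →L[ℂ] H)) u)
        MeasureTheory.volume (-R) R := by
    intro D hD h0 R
    exact (((ContinuousLinearMap.apply ℂ H u).continuous.comp
      (cont_res hD h0))).intervalIntegrable _ _
  have hfun : ∀ R : ℝ,
      (-(1 / (2 * Real.pi)) : ℂ) •
        ∫ z in (-R)..R,
          (Ring.inverse (D₁ + ((z : ℂ) * Complex.I) • 1))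
            (A ((Ring.inverse (D₂ + ((z : ℂ) * Complex.I) • 1)) u))
      = (((1 / (2 * (Real.pi:ℂ))) : ℂ) •
          ∫ z in (-R)..R, Ring.inverse (D₂ + ((z:ℂ)*I) • (1 : H →L[ℂ] H)) u)
        - (((1 / (2 * (Real.pi:ℂ))) : ℂ) •
          ∫ z in (-R)..R, Ring.inverse (D₁ + ((z:ℂ)*I) • (1 : H →L[ℂ] H)) u) := by
    intro R
    rw [intervalIntegral.integral_congr (g := fun z : ℝ =>
        Ring.inverse (D₁ + ((z:ℂ)*I) • (1 : H →L[ℂ] H)) u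
          - Ring.inverse (D₂ + ((z:ℂ)*I) • (1 : H →L[ℂ] H)) u)
      (fun z _ => hptwise z)]
    rw [intervalIntegral.integral_sub (hint D₁ hD₁ h₁ R) (hint D₂ hD₂ h₂ R)]
    rw [neg_smul, smul_sub, neg_sub, ← smul_sub]
  have hlim := (key_vec hD₂ h₂ u).sub (key_vec hD₁ h₁ u)
  have : (posSpectralProj D₂ u - ((1/2 : ℂ)) • u) - (posSpectralProj D₁ u - ((1/2 : ℂ)) • u)
      = posSpectralProj D₂ u - posSpectralProj D₁ u := by abel
  rw [this] at hlim
  exact hlim.congr fun R => (hfun R).symm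
end
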